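/- Let ε0 ∈ (0,1], let γ : ℕ → [0,∞) be nonincreasing with γ(k) → 0, and let Ω ∈ U(ε0,γ) be a p×p matrix. Then for every integer k0 with 1 ≤ k0 < p, one has ‖Ω‖_(∞,∞) ≤ γ(k0) + (2k0+1) ε0^{-1}. (This is the quantitative bound proved for the second inclusion of Lemma 1, obtained from ‖Ω − B_{k0}(Ω)‖_(∞,∞) ≤ γ(k0) and ‖B_{k0}(Ω)‖_(∞,∞) ≤ (2k0+1)‖Ω‖_∞ ≤ (2k0+1)‖Ω‖_(2,2).) -/

import Mathlib

open MeasureTheory ProbabilityTheory Filter Matrix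
open scoped BigOperators ENNReal NNReal Classical

noncomputable section

/-- The `L∞`-operator norm of a real matrix: maximum absolute row sum. -/
def linftyNorm {p : ℕ} (A : Matrix (Fin p) (Fin p) ℝ) : ℝ :=
  ⨆ i, ∑ j, |A i j|

/-- The `L2`-operator norm of a real matrix (largest singular value). -/
def l2Norm {p : ℕ} (A : Matrix (Fin p) (Fin p) ℝ) : ℝ :=
  ‖Matrix.toEuclideanCLM (𝕜 := ℝ) A‖

/-- The entrywise sup norm. -/
def entryNorm {p : ℕ} (A : Matrix (Fin p) (Fin p) ℝ) : ℝ :=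
  ⨆ i, ⨆ j, |A i j|

/-- `‖·‖_(r,r)` where `r = 2` when the boolean is `true` and `r = ∞` otherwise. -/
def rNorm (r : Bool) {p : ℕ} (A : Matrix (Fin p) (Fin p) ℝ) : ℝ :=
  if r then l2Norm A else linftyNorm A

/-- Membership in the class `U(ε₀, γ)`: symmetric positive definite, banding tail bound
`max_j Σ_i {|ω_ij| : |i−j| > k} ≤ γ(k)` for every `k ≥ 1`, and all eigenvalues in
`[ε₀, ε₀⁻¹]`. -/
def memU (ε0 : ℝ) (γ : ℕ → ℝ) {p : ℕ} (Ω : Matrix (Fin p) (Fin p) ℝ) : Prop :=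
  Ω.PosDef ∧
  (∀ k : ℕ, 1 ≤ k → ∀ j : Fin p,
    (∑ i : Fin p, if (k : ℤ) < |(i : ℤ) - (j : ℤ)| then |Ω i j| else 0) ≤ γ k) ∧
  (∀ μ ∈ spectrum ℝ Ω, ε0 ≤ μ ∧ μ ≤ ε0⁻¹)

/-- Square root of a positive semidefinite matrix (junk value `0` otherwise). -/
def matSqrt {p : ℕ} (A : Matrix (Fin p) (Fin p) ℝ) : Matrix (Fin p) (Fin p) ℝ :=
  if h : A.PosSemidef then
    h.1.eigenvectorUnitary.1 * diagonal ((↑) ∘ (√·) ∘ h.1.eigenvalues) *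
      (star h.1.eigenvectorUnitary : Matrix (Fin p) (Fin p) ℝ)
  else 0

/-- The centered Gaussian distribution `N_p(0, S0)` on `Fin p → ℝ`, realized as the pushforward
of the product of standard Gaussians under `x ↦ S0^{1/2} x`. -/
def gaussianVec {p : ℕ} (S0 : Matrix (Fin p) (Fin p) ℝ) : Measure (Fin p → ℝ) :=
  (Measure.pi fun _ : Fin p => gaussianReal 0 1).map fun x => (matSqrt S0).mulVec x

/-- Joint law of `n` i.i.d. `N_p(0, S0)` random vectors. -/
def gaussianSample (n p : ℕ) (S0 : Matrix (Fin p) (Fin p) ℝ) : Measure (Fin n → Fin p → ℝ) :=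
  Measure.pi fun _ : Fin n => gaussianVec S0

/-- The sample covariance matrix `n⁻¹ Σᵢ Xᵢ Xᵢᵀ`. -/
def sampleCov {n p : ℕ} (X : Fin n → Fin p → ℝ) : Matrix (Fin p) (Fin p) ℝ :=
  (n : ℝ)⁻¹ • ∑ i : Fin n, Matrix.vecMulVec (X i) (X i)

/-- The submatrix of `A` corresponding to the clique `C_j = {j, …, j+k}` (0-indexed). -/
def cliqueSub {p k : ℕ} (A : Matrix (Fin p) (Fin p) ℝ) (j : Fin (p - k)) :
    Matrix (Fin (k + 1)) (Fin (k + 1)) ℝ :=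
  fun a b => A ⟨j.1 + a.1, by have := j.2; have := a.2; omega⟩
               ⟨j.1 + b.1, by have := j.2; have := b.2; omega⟩

/-- The submatrix of `A` corresponding to the separator `S_j = {j+1, …, j+k}` (0-indexed). -/
def sepSub {p k : ℕ} (A : Matrix (Fin p) (Fin p) ℝ) (j : Fin (p - k - 1)) :
    Matrix (Fin k) (Fin k) ℝ :=
  fun a b => A ⟨j.1 + 1 + a.1, by have := j.2; have := a.2; omega⟩
               ⟨j.1 + 1 + b.1, by have := j.2; have := b.2; omega⟩

/-- Zero-padding of a matrix indexed by the clique `C_j` to a `p×p` matrix. -/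
def padClique {p k : ℕ} (j : Fin (p - k)) (B : Matrix (Fin (k + 1)) (Fin (k + 1)) ℝ) :
    Matrix (Fin p) (Fin p) ℝ :=
  fun a b =>
    if h : j.1 ≤ a.1 ∧ a.1 ≤ j.1 + k ∧ j.1 ≤ b.1 ∧ b.1 ≤ j.1 + k then
      B ⟨a.1 - j.1, by omega⟩ ⟨b.1 - j.1, by omega⟩
    else 0

/-- Zero-padding of a matrix indexed by the separator `S_j` to a `p×p` matrix. -/
def padSep {p k : ℕ} (j : Fin (p - k - 1)) (B : Matrix (Fin k) (Fin k) ℝ) :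
    Matrix (Fin p) (Fin p) ℝ :=
  fun a b =>
    if h : j.1 + 1 ≤ a.1 ∧ a.1 ≤ j.1 + k ∧ j.1 + 1 ≤ b.1 ∧ b.1 ≤ j.1 + k then
      B ⟨a.1 - (j.1 + 1), by omega⟩ ⟨b.1 - (j.1 + 1), by omega⟩
    else 0

/-- The graphical MLE `Ω̂^M = Σ_j (S_{C_j}^{-1})^0 − Σ_j (S_{S_j}^{-1})^0` for the `k`-banded
Gaussian graphical model. -/
def graphicalMLE (k : ℕ) {p : ℕ} (S : Matrix (Fin p) (Fin p) ℝ) :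
    Matrix (Fin p) (Fin p) ℝ :=
  (∑ j : Fin (p - k), padClique j (cliqueSub S j)⁻¹) -
  (∑ j : Fin (p - k - 1), padSep j (sepSub S j)⁻¹)

/-- `Σ_j ((n⁻¹ I_{k+1} + S_{C_j})⁻¹)^0`. -/
def cliqueTerm (n k : ℕ) {p : ℕ} (S : Matrix (Fin p) (Fin p) ℝ) :
    Matrix (Fin p) (Fin p) ℝ :=
  ∑ j : Fin (p - k), padClique j ((n : ℝ)⁻¹ • (1 : Matrix (Fin (k + 1)) (Fin (k + 1)) ℝ) +
    cliqueSub S j)⁻¹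

/-- `Σ_j ((n⁻¹ I_k + S_{S_j})⁻¹)^0`. -/
def sepTerm (n k : ℕ) {p : ℕ} (S : Matrix (Fin p) (Fin p) ℝ) :
    Matrix (Fin p) (Fin p) ℝ :=
  ∑ j : Fin (p - k - 1), padSep j ((n : ℝ)⁻¹ • (1 : Matrix (Fin k) (Fin k) ℝ) + sepSub S j)⁻¹

/-- The Bayes estimator under Stein's loss for the `G`-Wishart prior `W_G(δ, I_p)`. -/
def bayesL1 (δ n k : ℕ) {p : ℕ} (S : Matrix (Fin p) (Fin p) ℝ) :
    Matrix (Fin p) (Fin p) ℝ :=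
  (((δ : ℝ) + n - 2) / n) • (cliqueTerm n k S - sepTerm n k S)

/-- The Bayes estimator under squared-error loss (the posterior mean) for the `G`-Wishart prior
`W_G(δ, I_p)`. -/
def bayesL2 (δ n k : ℕ) {p : ℕ} (S : Matrix (Fin p) (Fin p) ℝ) :
    Matrix (Fin p) (Fin p) ℝ :=
  (((δ : ℝ) + k + n) / n) • (cliqueTerm n k S - sepTerm n k S) + (n : ℝ)⁻¹ • sepTerm n k S

lemma entry_bound {p : ℕ} (Ω : Matrix (Fin p) (Fin p) ℝ) (c : ℝ)
    (hPS : Ω.PosSemidef) (hspec : ∀ μ ∈ spectrum ℝ Ω, μ ≤ c) (i j : Fin p) :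
    |Ω i j| ≤ c := by
  have hherm := hPS.isHermitian
  have hM : (c • (1 : Matrix (Fin p) (Fin p) ℝ) - Ω).PosSemidef := by
    have key : c • (1 : Matrix (Fin p) (Fin p) ℝ) - Ω =
        (hherm.eigenvectorUnitary : Matrix (Fin p) (Fin p) ℝ) *
        Matrix.diagonal (fun i => c - hherm.eigenvalues i) *
        (hherm.eigenvectorUnitary : Matrix (Fin p) (Fin p) ℝ)ᴴ := by
      have hU : (hherm.eigenvectorUnitary : Matrix (Fin p) (Fin p) ℝ) *
          (hherm.eigenvectorUnitary : Matrix (Fin p) (Fin p) ℝ)ᴴ = 1 := by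
        rw [← Matrix.star_eq_conjTranspose]
        exact (Matrix.mem_unitaryGroup_iff).mp hherm.eigenvectorUnitary.2
      have h2 : Matrix.diagonal (fun i => c - hherm.eigenvalues i) =
          c • (1 : Matrix (Fin p) (Fin p) ℝ) - Matrix.diagonal hherm.eigenvalues := by
        ext a b
        by_cases h : a = b <;> simp [Matrix.diagonal, h, Matrix.one_apply]
      rw [h2, Matrix.mul_sub, Matrix.sub_mul, Matrix.mul_smul, Matrix.smul_mul,
        Matrix.mul_one, hU]
      congr 1
      conv_lhs => rw [hherm.spectral_theorem]
      simp [Matrix.star_eq_conjTranspose, Function.comp]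
    rw [key]
    exact (Matrix.PosSemidef.diagonal (fun i => by
        simp only [Pi.zero_apply, sub_nonneg]
        exact hspec _ (hherm.eigenvalues_mem_spectrum_real i))).mul_mul_conjTranspose_same _
  have hdiag : ∀ a : Fin p, Ω a a ≤ c := by
    intro a
    have h := hM.dotProduct_mulVec_nonneg (Pi.single a 1)
    simpa [Matrix.sub_mulVec, Matrix.mulVec_single, Matrix.smul_mulVec,
      Matrix.one_mulVec, Pi.single_apply, sub_nonneg, dotProduct,
      Finset.sum_ite_eq'] using h
  have hsym : Ω j i = Ω i j := by
    have := congrFun (congrFun hherm.eq i) j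
    simpa using this
  by_cases hij : i = j
  · subst hij
    rw [abs_le]
    refine ⟨?_, hdiag i⟩
    have h := hPS.dotProduct_mulVec_nonneg (Pi.single i 1)
    have h' : 0 ≤ Ω i i := by
      simpa [Matrix.mulVec_single, Pi.single_apply, dotProduct,
        Finset.sum_ite_eq'] using h
    have hc : 0 ≤ c := le_trans h' (hdiag i)
    linarith
  · have hplus := hPS.dotProduct_mulVec_nonneg (Pi.single i 1 + Pi.single j 1)
    have hminus := hPS.dotProduct_mulVec_nonneg (Pi.single i 1 - Pi.single j 1)
    simp only [Pi.star_apply, star_trivial, mul_one, Matrix.mulVec_add, Matrix.mulVec_sub, Matrix.mulVec_single,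
      Pi.single_apply, dotProduct, Pi.add_apply, Pi.sub_apply,
      add_mul, sub_mul, ite_mul, one_mul, zero_mul, Finset.sum_add_distrib,
      Finset.sum_sub_distrib, Finset.sum_ite_eq', Finset.mem_univ, if_true,
      MulOpposite.op_one, one_smul, Matrix.col_apply]
      at hplus hminus
    have hi := hdiag i
    have hj := hdiag j
    rw [abs_le]
    constructor <;> nlinarith [hsym, hplus, hminus]

/-- quantitative bound for the second inclusion of Lemma 1. -/
theorem statement1 (ε0 : ℝ) (hε0 : 0 < ε0) (hε1 : ε0 ≤ 1)
    (γ : ℕ → ℝ) (hγmono : Antitone γ) (hγnn : ∀ k, 0 ≤ γ k)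
    (hγ0 : Tendsto γ atTop (nhds 0))
    {p : ℕ} (Ω : Matrix (Fin p) (Fin p) ℝ) (hΩ : memU ε0 γ Ω) :
    ∀ k0 : ℕ, 1 ≤ k0 → k0 < p →
      linftyNorm Ω ≤ γ k0 + (2 * (k0 : ℝ) + 1) * ε0⁻¹ := by
  intro k0 hk1 hkp
  obtain ⟨hPD, hband, hspec⟩ := hΩ
  have hp : 0 < p := lt_trans (Nat.lt_of_lt_of_le Nat.zero_lt_one hk1) hkp
  haveI : Nonempty (Fin p) := ⟨⟨0, hp⟩⟩
  have hεinv : (0:ℝ) ≤ ε0⁻¹ := by positivity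
  have hentry : ∀ a b : Fin p, |Ω a b| ≤ ε0⁻¹ :=
    entry_bound Ω ε0⁻¹ hPD.posSemidef (fun μ hμ => (hspec μ hμ).2)
  have hsym : ∀ a b : Fin p, Ω a b = Ω b a := by
    intro a b
    have := congrFun (congrFun hPD.isHermitian.eq b) a
    simpa using this
  have hrow : ∀ i : Fin p, ∑ j, |Ω i j| ≤ γ k0 + (2 * (k0:ℝ) + 1) * ε0⁻¹ := by
    intro i
    have hsplit : ∑ j, |Ω i j| =
        (∑ j : Fin p, if (k0:ℤ) < |(j:ℤ) - (i:ℤ)| then |Ω j i| else 0) +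
        (∑ j : Fin p, if (k0:ℤ) < |(j:ℤ) - (i:ℤ)| then 0 else |Ω i j|) := by
      rw [← Finset.sum_add_distrib]
      refine Finset.sum_congr rfl fun j _ => ?_
      rw [hsym i j]
      by_cases h : (k0:ℤ) < |(j:ℤ) - (i:ℤ)| <;> simp [h]
    rw [hsplit]
    have h1 := hband k0 hk1 i
    have h2 : (∑ j : Fin p, if (k0:ℤ) < |(j:ℤ) - (i:ℤ)| then 0 else |Ω i j|) ≤
        (2 * (k0:ℝ) + 1) * ε0⁻¹ := by
      have hle : (∑ j : Fin p, if (k0:ℤ) < |(j:ℤ) - (i:ℤ)| then 0 else |Ω i j|) ≤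
          (∑ j : Fin p, if (k0:ℤ) < |(j:ℤ) - (i:ℤ)| then 0 else ε0⁻¹) := by
        refine Finset.sum_le_sum fun j _ => ?_
        by_cases h : (k0:ℤ) < |(j:ℤ) - (i:ℤ)| <;> simp [h, hentry i j]
      have hcard : (Finset.univ.filter
          (fun j : Fin p => ¬ (k0:ℤ) < |(j:ℤ) - (i:ℤ)|)).card ≤ 2 * k0 + 1 := by
        have hinj : ∀ a ∈ Finset.univ.filter
            (fun j : Fin p => ¬ (k0:ℤ) < |(j:ℤ) - (i:ℤ)|), ((a:ℤ)) ∈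
            Finset.Icc ((i:ℤ) - k0) ((i:ℤ) + k0) := by
          intro a ha
          simp only [Finset.mem_filter, not_lt] at ha
          rw [abs_le] at ha
          simp only [Finset.mem_Icc]
          omega
        calc (Finset.univ.filter
            (fun j : Fin p => ¬ (k0:ℤ) < |(j:ℤ) - (i:ℤ)|)).card
            ≤ (Finset.Icc ((i:ℤ) - k0) ((i:ℤ) + k0)).card :=
              Finset.card_le_card_of_injOn (fun j => (j:ℤ)) hinj
                (fun a _ b _ h => Fin.ext (by simp only at h; exact_mod_cast h))
          _ = 2 * k0 + 1 := by rw [Int.card_Icc]; omega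
      have heq : (∑ j : Fin p, if (k0:ℤ) < |(j:ℤ) - (i:ℤ)| then 0 else ε0⁻¹) =
          ((Finset.univ.filter
            (fun j : Fin p => ¬ (k0:ℤ) < |(j:ℤ) - (i:ℤ)|)).card : ℝ) * ε0⁻¹ := by
        rw [Finset.sum_ite, Finset.sum_const, Finset.sum_const]
        simp [nsmul_eq_mul]
      refine le_trans hle ?_
      rw [heq]
      have : ((Finset.univ.filter
          (fun j : Fin p => ¬ (k0:ℤ) < |(j:ℤ) - (i:ℤ)|)).card : ℝ) ≤ 2 * (k0:ℝ) + 1 := by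
        exact_mod_cast hcard
      exact mul_le_mul_of_nonneg_right this hεinv
    exact add_le_add h1 h2
  exact ciSup_le hrow

end
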